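/- A measurable function f : (X,μ)×(Y,ν) → Z on standard probability spaces is pure if and only if both maps f_X : X → B(Y,Z), x ↦ [f(x,·)]_ν, and f_Y : Y → B(X,Z), y ↦ [f(·,y)]_μ, are one-to-one on a set of full measure. -/

import Mathlib

open MeasureTheory Filter Topology ProbabilityTheory

noncomputable section

/-- A finitely supported permutation of `ℕ` (an element of `S_ℕ`). -/
def FinSupp (g : Equiv.Perm ℕ) : Prop :=
  {n : ℕ | g n ≠ n}.Finite

/-- The action of a pair of permutations on infinite matrices:
`(g₁,g₂)·r = (r (g₁⁻¹ i) (g₂⁻¹ j))_{i,j}`. -/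
def permMat {Z : Type*} (g₁ g₂ : Equiv.Perm ℕ) (r : ℕ → ℕ → Z) : ℕ → ℕ → Z :=
  fun i j => r (g₁.symm i) (g₂.symm j)

/-- The action of a pair of permutations on pairs of sequences. -/
def permSeq {X Y : Type*} (g₁ g₂ : Equiv.Perm ℕ) (p : (ℕ → X) × (ℕ → Y)) :
    (ℕ → X) × (ℕ → Y) :=
  (fun i => p.1 (g₁.symm i), fun j => p.2 (g₂.symm j))

/-- `P` is the Bernoulli (infinite product) measure `μ^ℕ` on `X^ℕ`: it is a probability
measure whose finite-dimensional cylinder distributions are products of `μ`. -/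
def IsBernoulli {X : Type*} [MeasurableSpace X] (μ : Measure X) (P : Measure (ℕ → X)) : Prop :=
  IsProbabilityMeasure P ∧
    ∀ (n : ℕ) (A : Fin n → Set X), (∀ i, MeasurableSet (A i)) →
      P {x | ∀ i : Fin n, x (i : ℕ) ∈ A i} = ∏ i, μ (A i)

/-- `T` is an invertible mod 0 measure-preserving Borel map from `(X,μ)` to `(Y,ν)`. -/
def InvMod0 {X Y : Type*} [MeasurableSpace X] [MeasurableSpace Y]
    (μ : Measure X) (ν : Measure Y) (T : X → Y) : Prop :=
  MeasurePreserving T μ ν ∧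
    ∃ S : Y → X, Measurable S ∧ (∀ᵐ x ∂μ, S (T x) = x) ∧ (∀ᵐ y ∂ν, T (S y) = y)

/-- Two measurable functions of two variables are isomorphic: there are invertible mod 0
measure-preserving maps of the coordinate spaces carrying one function to the other a.e. -/
def IsIso {X Y X' Y' Z : Type*} [MeasurableSpace X] [MeasurableSpace Y]
    [MeasurableSpace X'] [MeasurableSpace Y'] (μ : Measure X) (ν : Measure Y)
    (μ' : Measure X') (ν' : Measure Y') (f : X → Y → Z) (g : X' → Y' → Z) : Prop :=
  ∃ S T, InvMod0 μ μ' S ∧ InvMod0 ν ν' T ∧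
    ∀ᵐ p ∂μ.prod ν, g (S p.1) (T p.2) = f p.1 p.2

/-- `g` is a factor of `f`: as for isomorphism, but with merely measure-preserving maps. -/
def IsFactor {X Y X' Y' Z : Type*} [MeasurableSpace X] [MeasurableSpace Y]
    [MeasurableSpace X'] [MeasurableSpace Y'] (μ : Measure X) (ν : Measure Y)
    (μ' : Measure X') (ν' : Measure Y') (f : X → Y → Z) (g : X' → Y' → Z) : Prop :=
  ∃ S T, MeasurePreserving S μ μ' ∧ MeasurePreserving T ν ν' ∧
    ∀ᵐ p ∂μ.prod ν, g (S p.1) (T p.2) = f p.1 p.2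

/-- `f` is pure: every factor of `f` (in the category of standard probability spaces)
is isomorphic to `f`. -/
def IsPure {X Y Z : Type} [MeasurableSpace X] [MeasurableSpace Y] [MeasurableSpace Z]
    (μ : Measure X) (ν : Measure Y) (f : X → Y → Z) : Prop :=
  ∀ (X' Y' : Type) [MeasurableSpace X'] [MeasurableSpace Y']
    [StandardBorelSpace X'] [StandardBorelSpace Y']
    (μ' : Measure X') (ν' : Measure Y')
    [IsProbabilityMeasure μ'] [IsProbabilityMeasure ν']
    (g : X' → Y' → Z), Measurable (Function.uncurry g) →
      IsFactor μ ν μ' ν' f g → IsIso μ ν μ' ν' f g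

/-- The congruence group of `f` is trivial: every pair of invertible mod 0
measure-preserving automorphisms leaving `f` invariant is the pair of identities (mod 0). -/
def TrivialCongruence {X Y Z : Type*} [MeasurableSpace X] [MeasurableSpace Y]
    (μ : Measure X) (ν : Measure Y) (f : X → Y → Z) : Prop :=
  ∀ S T, InvMod0 μ μ S → InvMod0 ν ν T →
    (∀ᵐ p ∂μ.prod ν, f (S p.1) (T p.2) = f p.1 p.2) →
    (∀ᵐ x ∂μ, S x = x) ∧ (∀ᵐ y ∂ν, T y = y)

/-- The evaluation map `F_f : X^ℕ × Y^ℕ → Z^{ℕ×ℕ}`, `((xᵢ),(yⱼ)) ↦ (f(xᵢ,yⱼ))_{i,j}`. -/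
def evalMatrix {X Y Z : Type*} (f : X → Y → Z) (p : (ℕ → X) × (ℕ → Y)) : ℕ → ℕ → Z :=
  fun i j => f (p.1 i) (p.2 j)

/-- The matrix distribution of `f`: the pushforward of the Bernoulli measure `μ^ℕ × ν^ℕ`
(given here as `P.prod Q`) under the evaluation map. -/
def matrixDist {X Y Z : Type*} [MeasurableSpace X] [MeasurableSpace Y] [MeasurableSpace Z]
    (P : Measure (ℕ → X)) (Q : Measure (ℕ → Y)) (f : X → Y → Z) : Measure (ℕ → ℕ → Z) :=
  (P.prod Q).map (evalMatrix f)

/-- The σ-algebra of Borel sets invariant under every transformation in `T`. -/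
def invariantAlg {M : Type*} [m : MeasurableSpace M] (T : Set (M → M)) : MeasurableSpace M where
  MeasurableSet' B := MeasurableSet B ∧ ∀ t ∈ T, t ⁻¹' B = B
  measurableSet_empty := ⟨MeasurableSet.empty, fun _ _ => Set.preimage_empty⟩
  measurableSet_compl := fun B hB => ⟨hB.1.compl, fun t ht => by
    rw [Set.preimage_compl, hB.2 t ht]⟩
  measurableSet_iUnion := fun s hs => ⟨MeasurableSet.iUnion fun i => (hs i).1, fun t ht => by
    rw [Set.preimage_iUnion]
    exact Set.iUnion_congr fun i => (hs i).2 t ht⟩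

/-- The row-permutation maps (action of `S_ℕ × {1}`). -/
def rowPermMaps (Z : Type*) : Set ((ℕ → ℕ → Z) → (ℕ → ℕ → Z)) :=
  {t | ∃ g : Equiv.Perm ℕ, FinSupp g ∧ t = permMat g 1}

/-- The column-permutation maps (action of `{1} × S_ℕ`). -/
def colPermMaps (Z : Type*) : Set ((ℕ → ℕ → Z) → (ℕ → ℕ → Z)) :=
  {t | ∃ g : Equiv.Perm ℕ, FinSupp g ∧ t = permMat 1 g}

/-- The sub-σ-algebra `S` generates the Borel σ-algebra of `X` mod `μ`-null sets. -/
def GeneratesMod0 {X : Type*} [MeasurableSpace X] (μ : Measure X)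
    (S : MeasurableSpace X) : Prop :=
  S ≤ ‹MeasurableSpace X› ∧
    ∀ B : Set X, MeasurableSet B → ∃ A : Set X, MeasurableSet[S] A ∧ μ (symmDiff A B) = 0

/-- `D` is invariant under the action of `S_ℕ × S_ℕ`. -/
def IsPermInvariant {Z : Type*} [MeasurableSpace Z] (D : Measure (ℕ → ℕ → Z)) : Prop :=
  ∀ g₁ g₂ : Equiv.Perm ℕ, FinSupp g₁ → FinSupp g₂ → D.map (permMat g₁ g₂) = D

/-- `D` is ergodic under the action of `S_ℕ × S_ℕ`. -/
def IsPermErgodic {Z : Type*} [MeasurableSpace Z] (D : Measure (ℕ → ℕ → Z)) : Prop :=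
  ∀ B : Set (ℕ → ℕ → Z), MeasurableSet B →
    (∀ g₁ g₂ : Equiv.Perm ℕ, FinSupp g₁ → FinSupp g₂ → permMat g₁ g₂ ⁻¹' B = B) →
    D B = 0 ∨ D B = 1

/-- `D` is a simple measure: the σ-algebras of Borel sets invariant under `S_ℕ × {1}`
and under `{1} × S_ℕ` together generate the Borel σ-algebra mod `D`-null sets. -/
def IsSimple {Z : Type*} [MeasurableSpace Z] (D : Measure (ℕ → ℕ → Z)) : Prop :=
  GeneratesMod0 D (invariantAlg (rowPermMaps Z) ⊔ invariantAlg (colPermMaps Z))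


namespace PureAux

open Set Function
open scoped ENNReal NNReal

lemma exists_full_subset {α : Type*} [MeasurableSpace α] (μ : Measure α) {p : α → Prop}
    (h : ∀ᵐ x ∂μ, p x) :
    ∃ A : Set α, MeasurableSet A ∧ μ Aᶜ = 0 ∧ ∀ x ∈ A, p x := by
  refine ⟨(toMeasurable μ {x | ¬ p x})ᶜ, (measurableSet_toMeasurable _ _).compl, ?_, ?_⟩
  · rw [compl_compl, measure_toMeasurable]
    exact ae_iff.mp h
  · intro x hx
    by_contra hpx
    exact hx (subset_toMeasurable _ _ hpx)

lemma measurableSet_eqZ {Z α : Type*} [MeasurableSpace Z] [StandardBorelSpace Z]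
    [MeasurableSpace α] {u v : α → Z}
    (hu : Measurable u) (hv : Measurable v) : MeasurableSet {a | u a = v a} := by
  have he := measurableEmbedding_embeddingReal Z
  have : {a | u a = v a} = {a | embeddingReal Z (u a) = embeddingReal Z (v a)} := by
    ext a
    exact ⟨fun h => by rw [Set.mem_setOf_eq] at h; simp [Set.mem_setOf_eq, h],
      fun h => he.injective h⟩
  rw [this]
  exact measurableSet_eq_fun (he.measurable.comp hu) (he.measurable.comp hv)

lemma measurableSet_eqPi {α ι : Type*} [Countable ι] [MeasurableSpace α] {u v : α → ι → ℝ}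
    (hu : Measurable u) (hv : Measurable v) : MeasurableSet {a | u a = v a} := by
  have : {a | u a = v a} = ⋂ i, {a | u a i = v a i} := by
    ext a; simp [funext_iff]
  rw [this]
  exact MeasurableSet.iInter fun i =>
    measurableSet_eq_fun ((measurable_pi_apply i).comp hu) ((measurable_pi_apply i).comp hv)

lemma ae_prod_of_ae_ae {α β : Type*} [MeasurableSpace α] [MeasurableSpace β]
    {μ : Measure α} {ν : Measure β} [SFinite ν] {p : α × β → Prop}
    (hp : MeasurableSet {q : α × β | p q}) (h : ∀ᵐ x ∂μ, ∀ᵐ y ∂ν, p (x, y)) :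
    ∀ᵐ q ∂μ.prod ν, p q := by
  rw [ae_iff]
  have hc : MeasurableSet {q : α × β | ¬ p q} := hp.compl
  rw [Measure.prod_apply hc]
  have h0 : ∀ᵐ x ∂μ, ν (Prod.mk x ⁻¹' {q : α × β | ¬ p q}) = 0 := by
    filter_upwards [h] with x hx
    exact ae_iff.mp hx
  rw [lintegral_congr_ae h0, lintegral_zero]

lemma ae_swap_iff {α β : Type*} [MeasurableSpace α] [MeasurableSpace β]
    (μ : Measure α) (ν : Measure β) [SFinite μ] [SFinite ν] {p : α × β → Prop}
    (hp : MeasurableSet {q : α × β | p q}) :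
    (∀ᵐ q ∂μ.prod ν, p q) ↔ ∀ᵐ q ∂ν.prod μ, p q.swap := by
  rw [← Measure.prod_swap]
  exact ae_map_iff measurable_swap.aemeasurable hp

section Emb

variable (Z : Type*) [MeasurableSpace Z] [StandardBorelSpace Z]

def eZ : Z → ℝ := fun z => Real.arctan (embeddingReal Z z) + 2

lemma eZ_emb : MeasurableEmbedding (eZ Z) := by
  have he := measurableEmbedding_embeddingReal Z
  have hm : Measurable (eZ Z) :=
    (Real.continuous_arctan.measurable.comp he.measurable).add_const 2
  have hi : Function.Injective (eZ Z) := by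
    intro a b hab
    exact he.injective (Real.arctan_injective (by simpa [eZ] using hab))
  exact hm.measurableEmbedding hi

variable {Z}

lemma eZ_pos (z : Z) : 0 < eZ Z z := by
  have h1 := Real.neg_pi_div_two_lt_arctan (embeddingReal Z z)
  have h2 := Real.pi_lt_d2
  unfold eZ
  linarith

lemma eZ_lt (z : Z) : eZ Z z < 4 := by
  have h1 := Real.arctan_lt_pi_div_two (embeddingReal Z z)
  have h2 := Real.pi_lt_d2
  unfold eZ
  linarith

variable (Z) [Nonempty Z]

def eInvZ : ℝ → Z := Function.extend (eZ Z) id fun _ => Classical.arbitrary Z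

lemma eInvZ_eZ (z : Z) : eInvZ Z (eZ Z z) = z := by
  rw [eInvZ, (eZ_emb Z).injective.extend_apply]
  rfl

lemma eInvZ_meas : Measurable (eInvZ Z) :=
  (eZ_emb Z).measurable_extend measurable_id measurable_const

end Emb

section Seq

variable (Y : Type*) [MeasurableSpace Y] [StandardBorelSpace Y]

/-- Generating sets of `Y` indexed by `Option ℚ`; `none` gives `univ`. -/
def Bopt : Option ℚ → Set Y := fun o =>
  o.elim Set.univ (fun q => embeddingReal Y ⁻¹' (Set.Iic (q : ℝ)))

lemma Bopt_meas (o : Option ℚ) : MeasurableSet (Bopt Y o) := by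
  cases o with
  | none => exact MeasurableSet.univ
  | some q => exact (measurableEmbedding_embeddingReal Y).measurable measurableSet_Iic

variable {Y} {Z : Type*} [MeasurableSpace Z] [StandardBorelSpace Z]
variable (ν : Measure Y)

/-- The classifying sequence of a function `u : Y → Z`. -/
def seqOf (u : Y → Z) : Option ℚ → ℝ := fun o => ∫ y in Bopt Y o, eZ Z (u y) ∂ν

lemma integrable_eZ {u : Y → Z} (hu : Measurable u) (ν' : Measure Y) [IsFiniteMeasure ν'] :
    Integrable (fun y => eZ Z (u y)) ν' := by
  refine Integrable.mono' (integrable_const 4)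
    (((eZ_emb Z).measurable.comp hu).aestronglyMeasurable) (ae_of_all _ fun y => ?_)
  rw [Real.norm_eq_abs, abs_of_pos (eZ_pos _)]
  exact (eZ_lt _).le

lemma seqOf_congr {u v : Y → Z} (h : u =ᵐ[ν] v) : seqOf ν u = seqOf ν v := by
  funext o
  exact integral_congr_ae (ae_restrict_of_ae (h.mono fun y hy => by simp [hy]))

variable [IsProbabilityMeasure ν]

lemma ae_eq_of_seqOf_eq {u v : Y → Z} (hu : Measurable u) (hv : Measurable v)
    (h : seqOf ν u = seqOf ν v) : u =ᵐ[ν] v := by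
  set jY := embeddingReal Y with hjY_def
  have hjY := measurableEmbedding_embeddingReal Y
  set F : Y → ℝ≥0∞ := fun y => ENNReal.ofReal (eZ Z (u y)) with hF_def
  set G : Y → ℝ≥0∞ := fun y => ENNReal.ofReal (eZ Z (v y)) with hG_def
  have hFm : Measurable F := ENNReal.measurable_ofReal.comp ((eZ_emb Z).measurable.comp hu)
  have hGm : Measurable G := ENNReal.measurable_ofReal.comp ((eZ_emb Z).measurable.comp hv)
  -- set lintegrals agree
  have hint : ∀ o : Option ℚ,
      ∫⁻ y in Bopt Y o, F y ∂ν = ∫⁻ y in Bopt Y o, G y ∂ν := by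
    intro o
    have hu' : Integrable (fun y => eZ Z (u y)) (ν.restrict (Bopt Y o)) := integrable_eZ hu _
    have hv' : Integrable (fun y => eZ Z (v y)) (ν.restrict (Bopt Y o)) := integrable_eZ hv _
    have h1 := ofReal_integral_eq_lintegral_ofReal hu' (ae_of_all _ fun y => (eZ_pos _).le)
    have h2 := ofReal_integral_eq_lintegral_ofReal hv' (ae_of_all _ fun y => (eZ_pos _).le)
    have := congrFun h o
    rw [seqOf, seqOf] at this
    rw [← h1, ← h2, this]
  -- finiteness of the withDensity measures
  have hfin : ∀ w : Y → ℝ≥0∞, (∀ y, w y ≤ 4) → Measurable w →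
      IsFiniteMeasure (ν.withDensity w) := by
    intro w hw hwm
    refine isFiniteMeasure_withDensity (ne_of_lt ?_)
    calc ∫⁻ y, w y ∂ν ≤ ∫⁻ _, 4 ∂ν := lintegral_mono hw
    _ = 4 := by simp
    _ < ⊤ := by norm_num
  have hFb : ∀ y, F y ≤ 4 := fun y => by
    rw [hF_def]
    calc ENNReal.ofReal (eZ Z (u y)) ≤ ENNReal.ofReal 4 :=
          ENNReal.ofReal_le_ofReal (eZ_lt _).le
    _ = 4 := by norm_num
  have hGb : ∀ y, G y ≤ 4 := fun y => by
    rw [hG_def]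
    calc ENNReal.ofReal (eZ Z (v y)) ≤ ENNReal.ofReal 4 :=
          ENNReal.ofReal_le_ofReal (eZ_lt _).le
    _ = 4 := by norm_num
  haveI := hfin F hFb hFm
  haveI := hfin G hGb hGm
  -- the two withDensity measures agree
  have hwd : ν.withDensity F = ν.withDensity G := by
    refine ext_of_generate_finite ((fun s => jY ⁻¹' s) '' (⋃ a : ℚ, {Set.Iic (a : ℝ)}))
      ?_ ?_ ?_ ?_
    · rw [← hjY.comap_eq, BorelSpace.measurable_eq (α := ℝ),
        Real.borel_eq_generateFrom_Iic_rat, MeasurableSpace.comap_generateFrom]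
    · rintro s hs t ht -
      simp only [Set.mem_image, Set.mem_iUnion, Set.mem_singleton_iff] at hs ht
      obtain ⟨s', ⟨q1, rfl⟩, rfl⟩ := hs
      obtain ⟨t', ⟨q2, rfl⟩, rfl⟩ := ht
      refine ⟨Set.Iic ((min q1 q2 : ℚ) : ℝ), ?_, ?_⟩
      · exact Set.mem_iUnion.mpr ⟨min q1 q2, rfl⟩
      · rw [← Set.preimage_inter, Set.Iic_inter_Iic]
        congr 1
        push_cast
        rfl
    · rintro s hs
      simp only [Set.mem_image, Set.mem_iUnion, Set.mem_singleton_iff] at hs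
      obtain ⟨s', ⟨q, rfl⟩, rfl⟩ := hs
      have hms : MeasurableSet (jY ⁻¹' Set.Iic (q : ℝ)) := hjY.measurable measurableSet_Iic
      rw [withDensity_apply _ hms, withDensity_apply _ hms]
      exact hint (some q)
    · rw [withDensity_apply _ MeasurableSet.univ, withDensity_apply _ MeasurableSet.univ]
      exact hint none
  have hae : F =ᵐ[ν] G :=
    (withDensity_eq_iff_of_sigmaFinite hFm.aemeasurable hGm.aemeasurable).mp hwd
  filter_upwards [hae] with y hy
  rw [hF_def, hG_def] at hy
  simp only at hy
  have : eZ Z (u y) = eZ Z (v y) :=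
    (ENNReal.ofReal_eq_ofReal_iff (eZ_pos _).le (eZ_pos _).le).mp hy
  exact (eZ_emb Z).injective this

/-- a.e. equality of sections iff classifying sequences agree. -/
lemma seqOf_eq_iff {u v : Y → Z} (hu : Measurable u) (hv : Measurable v) :
    seqOf ν u = seqOf ν v ↔ u =ᵐ[ν] v :=
  ⟨ae_eq_of_seqOf_eq ν hu hv, seqOf_congr ν⟩

end Seq

section SeqMap

variable {W Y Z : Type*} [MeasurableSpace W] [MeasurableSpace Y] [StandardBorelSpace Y]
  [MeasurableSpace Z] [StandardBorelSpace Z]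
variable (ν : Measure Y) [IsFiniteMeasure ν]

lemma measurable_seqMap {F : W → Y → Z} (hF : Measurable (Function.uncurry F)) :
    Measurable fun w => seqOf ν (F w) := by
  classical
  rw [measurable_pi_iff]
  intro o
  have hmeas : Measurable fun p : W × Y =>
      (if p.2 ∈ Bopt Y o then eZ Z (F p.1 p.2) else 0 : ℝ) := by
    refine Measurable.ite (measurable_snd (Bopt_meas Y o)) ?_ measurable_const
    exact (eZ_emb Z).measurable.comp hF
  have hSM := (hmeas.stronglyMeasurable).integral_prod_right' (ν := ν)
  have heq : (fun w => seqOf ν (F w) o) =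
      fun w => ∫ y, (if y ∈ Bopt Y o then eZ Z (F w y) else 0 : ℝ) ∂ν := by
    funext w
    rw [seqOf, ← integral_indicator (Bopt_meas Y o)]
    simp [Set.indicator_apply]
  exact heq ▸ hSM.measurable

lemma measurable_kernelSeq {A X : Type*} [MeasurableSpace A] [MeasurableSpace X]
    (κ : Kernel A X) [IsSFiniteKernel κ] {f : X → Y → Z}
    (hf : Measurable (Function.uncurry f)) :
    Measurable fun p : A × Y => ∫ x, eZ Z (f x p.2) ∂κ p.1 := by
  set κ' : Kernel (A × Y) X := κ.comap Prod.fst measurable_fst with hκ'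
  have h1 : Measurable (Function.uncurry fun (p : A × Y) (x : X) => eZ Z (f x p.2)) := by
    have : (Function.uncurry fun (p : A × Y) (x : X) => eZ Z (f x p.2)) =
        (fun q : (A × Y) × X => eZ Z (f q.2 q.1.2)) := rfl
    rw [this]
    exact (eZ_emb Z).measurable.comp (hf.comp (measurable_snd.prodMk (measurable_fst.snd)))
  have hSM := h1.stronglyMeasurable.integral_kernel_prod_right (κ := κ')
  have : (fun p : A × Y => ∫ x, eZ Z (f x p.2) ∂κ p.1) =
      fun p : A × Y => ∫ x, eZ Z (f x p.2) ∂κ' p := by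
    funext p
    rw [hκ', Kernel.comap_apply]
  rw [this]
  exact hSM.measurable

end SeqMap

section Backward

lemma nonempty_of_prob {α : Type*} [MeasurableSpace α] (μ : Measure α)
    [IsProbabilityMeasure μ] : Nonempty α := by
  by_contra h
  have h1 : (Set.univ : Set α) = ∅ := Set.univ_eq_empty_iff.mpr (not_nonempty_iff.mp h)
  have h2 := measure_univ (μ := μ)
  rw [h1, measure_empty] at h2
  exact zero_ne_one h2

lemma invMod0_of_injOn {X X' : Type*} [MeasurableSpace X] [StandardBorelSpace X]
    [MeasurableSpace X'] [StandardBorelSpace X'] [Nonempty X]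
    (μ : Measure X) (μ' : Measure X') [IsProbabilityMeasure μ] [IsProbabilityMeasure μ']
    {S : X → X'} (hS : MeasurePreserving S μ μ')
    {A : Set X} (hA : MeasurableSet A) (hAc : μ Aᶜ = 0) (hinj : Set.InjOn S A) :
    InvMod0 μ μ' S := by
  haveI : StandardBorelSpace A := hA.standardBorel
  let e : A → X' := fun a => S a
  have he_meas : Measurable e := hS.measurable.comp measurable_subtype_coe
  have he_inj : Function.Injective e := by
    intro a b hab
    exact Subtype.ext (hinj a.2 b.2 hab)
  have he : MeasurableEmbedding e := he_meas.measurableEmbedding he_inj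
  let R : X' → X := Function.extend e Subtype.val fun _ => Classical.arbitrary X
  have hR_meas : Measurable R := he.measurable_extend measurable_subtype_coe measurable_const
  have hRS : ∀ x ∈ A, R (S x) = x := by
    intro x hx
    show Function.extend e Subtype.val _ (e ⟨x, hx⟩) = x
    rw [he_inj.extend_apply]
  have hA1 : μ A = 1 := by
    have hcompl := measure_compl hA (measure_ne_top μ A)
    rw [measure_univ, hAc] at hcompl
    exact le_antisymm prob_le_one (tsub_eq_zero_iff_le.mp hcompl.symm)
  have hrange : μ' (Set.range e) = 1 := by
    have hmr : MeasurableSet (Set.range e) := he.measurableSet_range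
    have h1 : μ (S ⁻¹' Set.range e) = μ' (Set.range e) :=
      hS.measure_preimage hmr.nullMeasurableSet
    have h2 : A ⊆ S ⁻¹' Set.range e := fun x hx => ⟨⟨x, hx⟩, rfl⟩
    have h3 := measure_mono (μ := μ) h2
    rw [hA1, h1] at h3
    exact le_antisymm prob_le_one h3
  refine ⟨hS, R, hR_meas, ?_, ?_⟩
  · have hmem : ∀ᵐ x ∂μ, x ∈ A := by
      rw [ae_iff]
      exact hAc
    exact hmem.mono fun x hx => hRS x hx
  · have hy : ∀ y ∈ Set.range e, S (R y) = y := by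
      rintro y ⟨a, rfl⟩
      have h4 : R (e a) = a.val := he_inj.extend_apply _ _ _
      rw [h4]
    have hmem : ∀ᵐ y ∂μ', y ∈ Set.range e := by
      rw [ae_iff]
      have h5 : {y | ¬ y ∈ Set.range e} = (Set.range e)ᶜ := rfl
      rw [h5, measure_compl he.measurableSet_range (measure_ne_top _ _), hrange,
        measure_univ, tsub_self]
    exact hmem.mono fun y hy' => hy y hy'

lemma isPure_of_sections_injective {X Y Z : Type} [MeasurableSpace X] [StandardBorelSpace X]
    [MeasurableSpace Y] [StandardBorelSpace Y] [MeasurableSpace Z] [StandardBorelSpace Z]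
    (μ : Measure X) (ν : Measure Y) [IsProbabilityMeasure μ] [IsProbabilityMeasure ν]
    {f : X → Y → Z} (hf : Measurable (Function.uncurry f))
    (hA : ∃ A : Set X, MeasurableSet A ∧ μ Aᶜ = 0 ∧ ∀ x₁ ∈ A, ∀ x₂ ∈ A,
      (fun y => f x₁ y) =ᵐ[ν] (fun y => f x₂ y) → x₁ = x₂)
    (hB : ∃ B : Set Y, MeasurableSet B ∧ ν Bᶜ = 0 ∧ ∀ y₁ ∈ B, ∀ y₂ ∈ B,
      (fun x => f x y₁) =ᵐ[μ] (fun x => f x y₂) → y₁ = y₂) :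
    IsPure μ ν f := by
  obtain ⟨A, hAm, hAc, hAinj⟩ := hA
  obtain ⟨B, hBm, hBc, hBinj⟩ := hB
  intro X' Y' mX' mY' sbX' sbY' μ' ν' pμ' pν' g hg hfac
  obtain ⟨S, T, hS, hT, hae⟩ := hfac
  haveI : Nonempty X := nonempty_of_prob μ
  haveI : Nonempty Y := nonempty_of_prob ν
  have hset : MeasurableSet {p : X × Y | g (S p.1) (T p.2) = f p.1 p.2} :=
    measurableSet_eqZ
      (hg.comp ((hS.measurable.comp measurable_fst).prodMk (hT.measurable.comp measurable_snd)))
      hf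
  have hx := Measure.ae_ae_of_ae_prod hae
  obtain ⟨N₁, hN₁m, hN₁c, hN₁⟩ := exists_full_subset μ hx
  have hae' := (ae_swap_iff μ ν hset).mp hae
  have hy := Measure.ae_ae_of_ae_prod hae'
  obtain ⟨N₂, hN₂m, hN₂c, hN₂⟩ := exists_full_subset ν hy
  have hIA : Set.InjOn S (A ∩ N₁) := by
    intro x₁ hx₁ x₂ hx₂ hSx
    refine hAinj x₁ hx₁.1 x₂ hx₂.1 ?_
    filter_upwards [hN₁ x₁ hx₁.2, hN₁ x₂ hx₂.2] with y h1 h2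
    rw [← h1, ← h2, hSx]
  have hIB : Set.InjOn T (B ∩ N₂) := by
    intro y₁ hy₁ y₂ hy₂ hTy
    refine hBinj y₁ hy₁.1 y₂ hy₂.1 ?_
    filter_upwards [hN₂ y₁ hy₁.2, hN₂ y₂ hy₂.2] with x h1 h2
    have h1' : g (S x) (T y₁) = f x y₁ := h1
    have h2' : g (S x) (T y₂) = f x y₂ := h2
    rw [← h1', ← h2', hTy]
  have hACc : μ (A ∩ N₁)ᶜ = 0 := by
    rw [Set.compl_inter]
    refine le_antisymm (le_trans (measure_union_le _ _) ?_) zero_le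
    rw [hAc, hN₁c]
    simp
  have hBCc : ν (B ∩ N₂)ᶜ = 0 := by
    rw [Set.compl_inter]
    refine le_antisymm (le_trans (measure_union_le _ _) ?_) zero_le
    rw [hBc, hN₂c]
    simp
  exact ⟨S, T, invMod0_of_injOn μ μ' hS (hAm.inter hN₁m) hACc hIA,
    invMod0_of_injOn ν ν' hT (hBm.inter hN₂m) hBCc hIB, hae⟩

end Backward

section Forward

variable {X Y Z : Type} [MeasurableSpace X] [StandardBorelSpace X]
    [MeasurableSpace Y] [StandardBorelSpace Y] [MeasurableSpace Z] [StandardBorelSpace Z]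

lemma sections_injective_of_isPure
    (μ : Measure X) (ν : Measure Y) [IsProbabilityMeasure μ] [IsProbabilityMeasure ν]
    {f : X → Y → Z} (hf : Measurable (Function.uncurry f)) (hp : IsPure μ ν f) :
    ∃ A : Set X, MeasurableSet A ∧ μ Aᶜ = 0 ∧ ∀ x₁ ∈ A, ∀ x₂ ∈ A,
      (fun y => f x₁ y) =ᵐ[ν] (fun y => f x₂ y) → x₁ = x₂ := by
  haveI : Nonempty X := nonempty_of_prob μ
  haveI : Nonempty Y := nonempty_of_prob ν
  haveI : Nonempty Z := ⟨f (Classical.arbitrary X) (Classical.arbitrary Y)⟩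
  have hsec : ∀ x, Measurable (f x) := fun x => hf.comp measurable_prodMk_left
  -- the classifying map
  set h : X → (Option ℚ → ℝ) := fun x => seqOf ν (f x) with hh_def
  have hh : Measurable h := measurable_seqMap ν hf
  set μ' : Measure (Option ℚ → ℝ) := μ.map h with hμ'_def
  haveI : IsProbabilityMeasure μ' := Measure.isProbabilityMeasure_map hh.aemeasurable
  have hclass : ∀ x₁ x₂, h x₁ = h x₂ ↔ (f x₁ =ᵐ[ν] f x₂) := fun x₁ x₂ =>
    seqOf_eq_iff ν (hsec x₁) (hsec x₂)
  -- disintegration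
  have hhx : Measurable (fun x : X => (h x, x)) := hh.prodMk measurable_id
  set ρ : Measure ((Option ℚ → ℝ) × X) := μ.map (fun x => (h x, x)) with hρ_def
  haveI : IsProbabilityMeasure ρ :=
    Measure.isProbabilityMeasure_map hhx.aemeasurable
  set κ := ρ.condKernel with hκ_def
  have hρ_fst : ρ.fst = μ' := by
    rw [hρ_def, Measure.fst, Measure.map_map measurable_fst hhx]
    rfl
  have hGm : MeasurableSet {p : (Option ℚ → ℝ) × X | h p.2 = p.1} :=
    measurableSet_eqPi (hh.comp measurable_snd) measurable_fst
  -- concentration of the conditional kernel on fibers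
  have hFm : Measurable fun z =>
      κ z (Prod.mk z ⁻¹' {p : (Option ℚ → ℝ) × X | h p.2 = p.1}) :=
    Kernel.measurable_kernel_prodMk_left hGm
  have hFm' : Measurable fun z =>
      κ z (Prod.mk z ⁻¹' {p : (Option ℚ → ℝ) × X | h p.2 = p.1}ᶜ) :=
    Kernel.measurable_kernel_prodMk_left hGm.compl
  have hconc : ∀ᵐ z ∂μ', κ z (Prod.mk z ⁻¹' {p : (Option ℚ → ℝ) × X | h p.2 = p.1}ᶜ) = 0 := by
    have hρG : ρ {p : (Option ℚ → ℝ) × X | h p.2 = p.1}ᶜ = 0 := by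
      rw [hρ_def, Measure.map_apply hhx hGm.compl]
      convert measure_empty (μ := μ)
      ext x
      simp
    have hdis : μ' ⊗ₘ κ = ρ := by
      rw [← hρ_fst]
      exact ρ.disintegrate κ
    rw [← hdis, Measure.compProd_apply hGm.compl] at hρG
    exact (lintegral_eq_zero_iff hFm').mp hρG
  -- the factor function
  set G : (Option ℚ → ℝ) → Y → ℝ := fun z y => ∫ x, eZ Z (f x y) ∂κ z with hG_def
  have hGmeas : Measurable (Function.uncurry G) := measurable_kernelSeq κ hf
  set g : (Option ℚ → ℝ) → Y → Z := fun z y => eInvZ Z (G z y) with hg_def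
  have hgmeas : Measurable (Function.uncurry g) := (eInvZ_meas Z).comp hGmeas
  -- the key identity
  have hkey : ∀ᵐ x ∂μ, ∀ᵐ y ∂ν, g (h x) y = f x y := by
    have hconc' : ∀ᵐ x ∂μ,
        κ (h x) (Prod.mk (h x) ⁻¹' {p : (Option ℚ → ℝ) × X | h p.2 = p.1}ᶜ) = 0 := by
      have hmeasQ : MeasurableSet {z | κ z
          (Prod.mk z ⁻¹' {p : (Option ℚ → ℝ) × X | h p.2 = p.1}ᶜ) = 0} :=
        hFm' (measurableSet_singleton 0)
      exact (ae_map_iff hh.aemeasurable hmeasQ).mp hconc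
    filter_upwards [hconc'] with x hx1
    haveI : IsProbabilityMeasure (κ (h x)) := IsMarkovKernel.isProbabilityMeasure _
    have hfib : ∀ᵐ x' ∂κ (h x), f x' =ᵐ[ν] f x := by
      have hmem : ∀ᵐ x' ∂κ (h x), h x' = h x := by
        rw [ae_iff]
        exact hx1
      exact hmem.mono fun x' hx' => (hclass x' x).mp hx'
    have hE : MeasurableSet {q : X × Y | f q.1 q.2 = f x q.2} :=
      measurableSet_eqZ hf (hf.comp (measurable_const.prodMk measurable_snd))
    have hprodE : (κ (h x)).prod ν {q : X × Y | f q.1 q.2 = f x q.2}ᶜ = 0 := by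
      rw [Measure.prod_apply hE.compl]
      have h0 : ∀ᵐ x' ∂κ (h x),
          ν (Prod.mk x' ⁻¹' {q : X × Y | f q.1 q.2 = f x q.2}ᶜ) = 0 := by
        filter_upwards [hfib] with x' hx'
        exact ae_iff.mp hx'
      rw [lintegral_congr_ae h0, lintegral_zero]
    have hsym := Measure.prod_apply_symm (μ := κ (h x)) (ν := ν) hE.compl
    rw [hprodE] at hsym
    have h0' := (lintegral_eq_zero_iff (measurable_measure_prodMk_right hE.compl)).mp hsym.symm
    filter_upwards [h0'] with y hy0
    have hae_pt : ∀ᵐ x' ∂κ (h x), eZ Z (f x' y) = eZ Z (f x y) := by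
      have hpt : ∀ᵐ x' ∂κ (h x), f x' y = f x y := by
        rw [ae_iff]
        exact hy0
      exact hpt.mono fun x' e => by rw [e]
    have hGval : G (h x) y = eZ Z (f x y) := by
      rw [hG_def]
      simp only
      rw [integral_congr_ae hae_pt, integral_const, probReal_univ]
      simp
    show eInvZ Z (G (h x) y) = f x y
    rw [hGval, eInvZ_eZ]
  have hsetg : MeasurableSet {p : X × Y | g (h p.1) p.2 = f p.1 p.2} :=
    measurableSet_eqZ (hgmeas.comp ((hh.comp measurable_fst).prodMk measurable_snd)) hf
  have hkey' : ∀ᵐ p ∂μ.prod ν, g (h p.1) p.2 = f p.1 p.2 := ae_prod_of_ae_ae hsetg hkey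
  -- the factor and purity
  have hfac : IsFactor μ ν μ' ν f g :=
    ⟨h, id, ⟨hh, hμ'_def.symm⟩, MeasurePreserving.id ν, hkey'⟩
  obtain ⟨S', T', hS', hT', hiso⟩ := hp (Option ℚ → ℝ) Y μ' ν g hgmeas hfac
  -- the classifying map of g
  set H : (Option ℚ → ℝ) → (Option ℚ → ℝ) := fun z => seqOf ν (g z) with hH_def
  have hHm : Measurable H := measurable_seqMap ν hgmeas
  have hHfix : ∀ᵐ x ∂μ, H (h x) = h x := by
    filter_upwards [hkey] with x hx
    exact seqOf_congr ν hx
  set C := {z : Option ℚ → ℝ | H z = z} with hC_def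
  have hCm : MeasurableSet C := measurableSet_eqPi hHm measurable_id
  have hCfull : μ' Cᶜ = 0 := by
    rw [hμ'_def, Measure.map_apply hh hCm.compl]
    have : μ {x | ¬ H (h x) = h x} = 0 := ae_iff.mp hHfix
    exact this
  obtain ⟨R, hRm, hRS, hSR⟩ := hS'.2
  have c2 : ∀ᵐ x ∂μ, S' x ∈ C := by
    rw [ae_iff]
    have : μ (S' ⁻¹' Cᶜ) = μ' Cᶜ := hS'.1.measure_preimage hCm.compl.nullMeasurableSet
    rw [show {x | ¬ S' x ∈ C} = S' ⁻¹' Cᶜ from rfl, this, hCfull]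
  have c3 : ∀ᵐ x ∂μ, ∀ᵐ y ∂ν, g (S' x) (T' y) = f x y := Measure.ae_ae_of_ae_prod hiso
  obtain ⟨A, hAm, hAc, hAprop⟩ := exists_full_subset μ (hRS.and (c2.and c3))
  refine ⟨A, hAm, hAc, ?_⟩
  intro x₁ hx₁ x₂ hx₂ hff
  obtain ⟨h11, h12, h13⟩ := hAprop x₁ hx₁
  obtain ⟨h21, h22, h23⟩ := hAprop x₂ hx₂
  have hbm : MeasurableSet {y' : Y | g (S' x₁) y' = g (S' x₂) y'} :=
    measurableSet_eqZ (hgmeas.comp (measurable_const.prodMk measurable_id))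
      (hgmeas.comp (measurable_const.prodMk measurable_id))
  have hpre : ν (T' ⁻¹' {y' : Y | g (S' x₁) y' = g (S' x₂) y'}ᶜ) = 0 := by
    have hmemT : ∀ᵐ y ∂ν, T' y ∈ {y' : Y | g (S' x₁) y' = g (S' x₂) y'} := by
      filter_upwards [h13, h23, hff] with y a b c
      show g (S' x₁) (T' y) = g (S' x₂) (T' y)
      rw [a, b]
      exact c
    exact ae_iff.mp hmemT
  have hbad : ν {y' : Y | g (S' x₁) y' = g (S' x₂) y'}ᶜ = 0 := by
    have := hT'.1.measure_preimage hbm.compl.nullMeasurableSet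
    rw [← this, hpre]
  have hgg : g (S' x₁) =ᵐ[ν] g (S' x₂) := by
    rw [Filter.EventuallyEq, ae_iff]
    exact hbad
  have hS'eq : S' x₁ = S' x₂ := by
    have e1 : H (S' x₁) = S' x₁ := h12
    have e2 : H (S' x₂) = S' x₂ := h22
    rw [← e1, ← e2]
    exact seqOf_congr ν hgg
  rw [← h11, ← h21, hS'eq]

end Forward

lemma isPure_swap {X Y Z : Type} [MeasurableSpace X] [StandardBorelSpace X]
    [MeasurableSpace Y] [StandardBorelSpace Y] [MeasurableSpace Z] [StandardBorelSpace Z]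
    (μ : Measure X) (ν : Measure Y) [IsProbabilityMeasure μ] [IsProbabilityMeasure ν]
    {f : X → Y → Z} (hf : Measurable (Function.uncurry f)) (hp : IsPure μ ν f) :
    IsPure ν μ (fun y x => f x y) := by
  intro P Q instP instQ sbP sbQ μP νQ pP pQ g hg hfac
  obtain ⟨S, T, hS, hT, hae⟩ := hfac
  have hset : MeasurableSet {p : X × Y | g (S p.2) (T p.1) = f p.1 p.2} :=
    measurableSet_eqZ
      (hg.comp ((hS.measurable.comp measurable_snd).prodMk (hT.measurable.comp measurable_fst)))
      hf
  have hae2 : ∀ᵐ p ∂μ.prod ν, g (S p.2) (T p.1) = f p.1 p.2 :=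
    (ae_swap_iff μ ν hset).mpr hae
  have hg' : Measurable (Function.uncurry fun q p => g p q) := hg.comp measurable_swap
  have hfac' : IsFactor μ ν νQ μP f (fun q p => g p q) := ⟨T, S, hT, hS, hae2⟩
  obtain ⟨S₁, T₁, hS₁, hT₁, hI⟩ := hp Q P νQ μP (fun q p => g p q) hg' hfac'
  refine ⟨T₁, S₁, hT₁, hS₁, ?_⟩
  have hset2 : MeasurableSet {p : X × Y | g (T₁ p.2) (S₁ p.1) = f p.1 p.2} :=
    measurableSet_eqZ
      (hg.comp ((hT₁.1.measurable.comp measurable_snd).prodMk (hS₁.1.measurable.comp measurable_fst)))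
      hf
  exact (ae_swap_iff μ ν hset2).mp hI

end PureAux

/-- A measurable function `f : (X,μ) × (Y,ν) → Z` on standard probability spaces is pure
if and only if both maps `f_X : x ↦ [f(x,·)]_ν` and `f_Y : y ↦ [f(·,y)]_μ` are one-to-one
on a set of full measure. -/
theorem pure_iff_sections_injective
    {X Y Z : Type} [MeasurableSpace X] [StandardBorelSpace X]
    [MeasurableSpace Y] [StandardBorelSpace Y]
    [MeasurableSpace Z] [StandardBorelSpace Z]
    (μ : Measure X) (ν : Measure Y)
    [IsProbabilityMeasure μ] [IsProbabilityMeasure ν]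
    (f : X → Y → Z) (hf : Measurable (Function.uncurry f)) :
    IsPure μ ν f ↔
      ((∃ A : Set X, MeasurableSet A ∧ μ Aᶜ = 0 ∧
          ∀ x₁ ∈ A, ∀ x₂ ∈ A,
            (fun y => f x₁ y) =ᵐ[ν] (fun y => f x₂ y) → x₁ = x₂) ∧
        (∃ B : Set Y, MeasurableSet B ∧ ν Bᶜ = 0 ∧
          ∀ y₁ ∈ B, ∀ y₂ ∈ B,
            (fun x => f x y₁) =ᵐ[μ] (fun x => f x y₂) → y₁ = y₂)) := by
  constructor
  · intro hp
    refine ⟨PureAux.sections_injective_of_isPure μ ν hf hp, ?_⟩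
    have hf' : Measurable (Function.uncurry fun y x => f x y) := hf.comp measurable_swap
    exact PureAux.sections_injective_of_isPure ν μ hf' (PureAux.isPure_swap μ ν hf hp)
  · intro hsec
    exact PureAux.isPure_of_sections_injective μ ν hf hsec.1 hsec.2

end
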